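/- Let d ≥ 2. Let h ∈ GL(d,ℝ), let α, β : Fin d → ℝ be positive and nonincreasing, and set a := diag(α) and b := diag(β). Then sin∠(e₁, h·e₁) ≤ (α 1 / β 0) · ‖h⁻¹‖ · ‖(a⁻¹·h·b)·e₁‖, where h·e₁ and (a⁻¹·h·b)·e₁ denote the indicated matrices applied to the vector e₁. -/

import Mathlib

open Matrix
open scoped RealInnerProductSpace

/-- The operator norm of a `d × d` real matrix acting on Euclidean `ℝ^d`. -/
noncomputable def opNorm {d : ℕ} (M : Matrix (Fin d) (Fin d) ℝ) : ℝ :=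
  ‖LinearMap.toContinuousLinearMap (Matrix.toEuclideanLin M)‖

/-- The action of a `d × d` real matrix on Euclidean `ℝ^d`. -/
noncomputable def appE {d : ℕ} (M : Matrix (Fin d) (Fin d) ℝ)
    (v : EuclideanSpace ℝ (Fin d)) : EuclideanSpace ℝ (Fin d) :=
  Matrix.toEuclideanLin M v

/-- The sine of the angle between two vectors of Euclidean `ℝ^d`. -/
noncomputable def sinAngle {d : ℕ} (u v : EuclideanSpace ℝ (Fin d)) : ℝ :=
  Real.sin (InnerProductGeometry.angle u v)

/-- The first standard basis vector of Euclidean `ℝ^d`. -/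
noncomputable def e1 {d : ℕ} (h : 0 < d) : EuclideanSpace ℝ (Fin d) :=
  EuclideanSpace.single ⟨0, h⟩ 1

theorem key {d : ℕ} (h : Matrix (Fin d) (Fin d) ℝ) (hh : IsUnit h.det)
    (α β : Fin d → ℝ) (hα : ∀ i, 0 < α i) (hβ : ∀ i, 0 < β i)
    (hα' : Antitone α) (i1 : Fin d) (hi1 : (i1 : ℕ) = 1) (hd0 : 0 < d) :
    sinAngle (e1 hd0) (appE h (e1 hd0))
      ≤ (α i1 / β ⟨0, hd0⟩) * opNorm h⁻¹ *
        ‖appE ((Matrix.diagonal α)⁻¹ * h * Matrix.diagonal β) (e1 hd0)‖ := by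
  set i0 : Fin d := ⟨0, hd0⟩ with hi0
  set u : EuclideanSpace ℝ (Fin d) := e1 hd0 with hu
  set v : EuclideanSpace ℝ (Fin d) := appE h u with hv
  set w : EuclideanSpace ℝ (Fin d) :=
    appE ((Matrix.diagonal α)⁻¹ * h * Matrix.diagonal β) u with hw
  have happ : ∀ (M : Matrix (Fin d) (Fin d) ℝ) (i : Fin d), appE M u i = M i i0 := by
    intro M i
    rw [hu, e1, appE, Matrix.toEuclideanLin_apply]
    simp [hi0, Matrix.mulVec_single]
  have hve : ∀ i, v i = h i i0 := fun i => happ h i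
  have hwe : ∀ i, w i = (α i)⁻¹ * h i i0 * β i0 := by
    intro i
    have hdi : (Matrix.diagonal α)⁻¹ = Matrix.diagonal (fun i => (α i)⁻¹) := by
      apply Matrix.inv_eq_left_inv
      rw [Matrix.diagonal_mul_diagonal]
      convert Matrix.diagonal_one with i
      exact inv_mul_cancel₀ (ne_of_gt (hα i))
    rw [hw, happ, hdi, Matrix.mul_diagonal, Matrix.diagonal_mul]
  have hnu : ‖u‖ = 1 := by simp [hu, e1]
  have hiuv : appE h⁻¹ v = u := by
    rw [hv]
    simp only [appE, Matrix.toEuclideanLin_apply, Equiv.apply_symm_apply,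
      Matrix.mulVec_mulVec, Matrix.nonsing_inv_mul h hh, Matrix.one_mulVec]
  -- norm of v is positive
  have h5 : 1 ≤ opNorm h⁻¹ * ‖v‖ := by
    have := (LinearMap.toContinuousLinearMap (Matrix.toEuclideanLin h⁻¹)).le_opNorm v
    have h6 : ‖appE h⁻¹ v‖ ≤ opNorm h⁻¹ * ‖v‖ := this
    rwa [hiuv, hnu] at h6
  -- inner products
  have hinner_uu : (inner ℝ u u : ℝ) = 1 := by
    rw [real_inner_self_eq_norm_mul_norm, hnu]; norm_num
  have hinner_uv : (inner ℝ u v : ℝ) = v i0 := by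
    simp [hu, e1, EuclideanSpace.inner_single_left, hi0]
  have hsin : sinAngle u v * ‖v‖ = Real.sqrt ((inner ℝ v v : ℝ) - v i0 * v i0) := by
    have h7 := InnerProductGeometry.sin_angle_mul_norm_mul_norm u v
    rw [hnu, one_mul] at h7
    rw [sinAngle, h7, hinner_uu, hinner_uv, one_mul]
  have hVV : (inner ℝ v v : ℝ) = ∑ i, v i ^ 2 := by
    rw [PiLp.inner_apply]
    exact Finset.sum_congr rfl fun i _ => by simp [sq]
  have hsplit : (inner ℝ v v : ℝ) - v i0 * v i0 = ∑ i ∈ Finset.univ.erase i0, v i ^ 2 := by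
    rw [hVV, ← Finset.sum_erase_add _ _ (Finset.mem_univ i0)]
    ring
  have hnw : ‖w‖ = Real.sqrt (∑ i, w i ^ 2) := by
    rw [EuclideanSpace.norm_eq]
    congr 1
    exact Finset.sum_congr rfl fun i _ => by rw [Real.norm_eq_abs, sq_abs]
  have hβ0 : 0 < β i0 := hβ i0
  have hc : 0 ≤ α i1 / β i0 := le_of_lt (div_pos (hα i1) hβ0)
  have hbound : ∑ i ∈ Finset.univ.erase i0, v i ^ 2 ≤ (α i1 / β i0) ^ 2 * ∑ i, w i ^ 2 := by
    rw [Finset.mul_sum]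
    calc ∑ i ∈ Finset.univ.erase i0, v i ^ 2
        ≤ ∑ i ∈ Finset.univ.erase i0, (α i1 / β i0) ^ 2 * w i ^ 2 := by
          apply Finset.sum_le_sum
          intro i hi
          have hine : i ≠ i0 := Finset.ne_of_mem_erase hi
          have h1le : (1 : ℕ) ≤ (i : ℕ) := by
            have hne : (i : ℕ) ≠ 0 := fun h0 => hine (Fin.ext (by simp [hi0, h0]))
            omega
          have hαle : α i ≤ α i1 := hα' (by rw [Fin.le_def, hi1]; exact h1le)
          have hvwi : v i = (α i / β i0) * w i := by
            have hβ0' : β i0 ≠ 0 := ne_of_gt hβ0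
            have hα0' : α i ≠ 0 := ne_of_gt (hα i)
            rw [hve i, hwe i]
            field_simp
          rw [hvwi, mul_pow]
          apply mul_le_mul_of_nonneg_right _ (sq_nonneg _)
          have hdd : α i / β i0 ≤ α i1 / β i0 := by gcongr
          exact pow_le_pow_left₀ (le_of_lt (div_pos (hα i) hβ0)) hdd 2
      _ ≤ ∑ i, (α i1 / β i0) ^ 2 * w i ^ 2 := by
          apply Finset.sum_le_sum_of_subset_of_nonneg (Finset.erase_subset _ _)
          intro i _ _
          positivity
  have h4 : Real.sqrt (∑ i ∈ Finset.univ.erase i0, v i ^ 2) ≤ (α i1 / β i0) * ‖w‖ := by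
    rw [hnw, ← Real.sqrt_sq hc, ← Real.sqrt_mul (sq_nonneg _)]
    exact Real.sqrt_le_sqrt hbound
  have hs0 : 0 ≤ sinAngle u v :=
    Real.sin_nonneg_of_nonneg_of_le_pi (InnerProductGeometry.angle_nonneg _ _)
      (InnerProductGeometry.angle_le_pi _ _)
  calc sinAngle u v ≤ sinAngle u v * (opNorm h⁻¹ * ‖v‖) := le_mul_of_one_le_right hs0 h5
    _ = sinAngle u v * ‖v‖ * opNorm h⁻¹ := by ring
    _ = Real.sqrt (∑ i ∈ Finset.univ.erase i0, v i ^ 2) * opNorm h⁻¹ := by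
        rw [hsin, hsplit]
    _ ≤ (α i1 / β i0) * ‖w‖ * opNorm h⁻¹ :=
        mul_le_mul_of_nonneg_right h4 (norm_nonneg _)
    _ = (α i1 / β i0) * opNorm h⁻¹ * ‖w‖ := by ring

/-- The basic angle estimate: for `h ∈ GL(d,ℝ)` and positive nonincreasing `α, β` with
`a = diag(α)`, `b = diag(β)`, one has
`sin∠(e₁, h·e₁) ≤ (α 1 / β 0) · ‖h⁻¹‖ · ‖(a⁻¹·h·b)·e₁‖`. -/
theorem stmt6 (d : ℕ) (hd : 2 ≤ d) (h : Matrix (Fin d) (Fin d) ℝ) (hh : IsUnit h.det)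
    (α β : Fin d → ℝ) (hα : ∀ i, 0 < α i) (hβ : ∀ i, 0 < β i)
    (hα' : Antitone α) (hβ' : Antitone β) :
    sinAngle (e1 (by omega)) (appE h (e1 (by omega)))
      ≤ (α ⟨1, by omega⟩ / β ⟨0, by omega⟩) * opNorm h⁻¹ *
        ‖appE ((Matrix.diagonal α)⁻¹ * h * Matrix.diagonal β) (e1 (by omega))‖ := by
  exact key h hh α β hα hβ hα' ⟨1, by omega⟩ rfl (by omega)
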